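/- Let 𝒳 and 𝒴 be disjoint finite families of finite subsets of ℕ with 𝒢 = ⋃_{A∈𝒳} A, and suppose 𝒳 is of maximum size among all subfamilies 𝒵 ⊆ 𝒳 ∪ 𝒴 with |⋃_{A∈𝒵} A| < |𝒵|. If 𝒮 ⊆ 𝒴 is nonempty and |𝒢' ∩ ⋃_{A∈𝒮} A| < |𝒮| where 𝒢' = (⋃_{A∈𝒳∪𝒴} A) \ 𝒢, then |⋃_{A∈𝒮∪𝒳} A| < |𝒮 ∪ 𝒳|, contradicting maximality; hence no such 𝒮 exists. -/
import Mathlib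


theorem stmt_14 (X Y : Finset (Finset ℕ)) (hdisj : Disjoint X Y)
    (G : Finset ℕ) (hG : G = X.biUnion id)
    (hX : X = ∅ ∨ (X.biUnion id).card < X.card)
    (hmax : ∀ Z ⊆ X ∪ Y, (Z.biUnion id).card < Z.card → Z.card ≤ X.card) :
    ∀ S ⊆ Y, S.Nonempty →
      S.card ≤ (((((X ∪ Y).biUnion id) \ G)) ∩ S.biUnion id).card := by
  intro S hS hSne
  by_contra h
  push_neg at h
  set G' := ((X ∪ Y).biUnion id) \ G with hG'
  have hSX : Disjoint S X := (hdisj.symm.mono_left hS)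
  have hZsub : S ∪ X ⊆ X ∪ Y := by
    intro a ha
    rcases Finset.mem_union.1 ha with h1 | h1
    · exact Finset.mem_union_right _ (hS h1)
    · exact Finset.mem_union_left _ h1
  have hcardZ : (S ∪ X).card = S.card + X.card := Finset.card_union_of_disjoint hSX
  have hUnion : (S ∪ X).biUnion id ⊆ G ∪ (G' ∩ S.biUnion id) := by
    intro a ha
    rw [Finset.mem_biUnion] at ha
    obtain ⟨A, hA, haA⟩ := ha
    rcases Finset.mem_union.1 hA with h1 | h1
    · by_cases hg : a ∈ G
      · exact Finset.mem_union_left _ hg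
      · refine Finset.mem_union_right _ (Finset.mem_inter.2 ⟨Finset.mem_sdiff.2 ⟨?_, hg⟩,
          Finset.mem_biUnion.2 ⟨A, h1, haA⟩⟩)
        exact Finset.mem_biUnion.2 ⟨A, Finset.mem_union_right _ (hS h1), haA⟩
    · exact Finset.mem_union_left _ (by rw [hG]; exact Finset.mem_biUnion.2 ⟨A, h1, haA⟩)
  have hGcard : G.card ≤ X.card := by
    rcases hX with h1 | h1
    · simp [hG, h1]
    · rw [hG]; omega
  have hlt : ((S ∪ X).biUnion id).card < (S ∪ X).card := by
    calc ((S ∪ X).biUnion id).card ≤ (G ∪ (G' ∩ S.biUnion id)).card :=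
          Finset.card_le_card hUnion
      _ ≤ G.card + (G' ∩ S.biUnion id).card := Finset.card_union_le _ _
      _ < X.card + S.card := by omega
      _ = (S ∪ X).card := by omega
  have hmaxZ := hmax _ hZsub hlt
  have hpos : 1 ≤ S.card := Finset.card_pos.2 hSne
  omega
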